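/- If α⋆β = α⋆β' with β and β' of the same sign (both positive or both negative), then β = β'. -/
import Mathlib


open Metric Set
open scoped Classical

/-- Four-point condition for δ-hyperbolicity. -/
def FourPointHyp (X : Type*) [MetricSpace X] (δ : ℝ) : Prop :=
  ∀ x y z w : X,
    dist x y + dist z w ≤ max (dist x z + dist y w) (dist y z + dist x w) + 2 * δ

/-- `s` is a geodesic segment from `a` to `b`. -/
def IsGeodSegment {X : Type*} [MetricSpace X] (a b : X) (s : Set X) : Prop :=
  ∃ f : ℝ → X, f 0 = a ∧ f (dist a b) = b ∧
    (∀ u ∈ Icc (0:ℝ) (dist a b), ∀ v ∈ Icc (0:ℝ) (dist a b),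
      dist (f u) (f v) = |u - v|) ∧
    s = f '' Icc (0:ℝ) (dist a b)

/-- `X` is a geodesic space. -/
def IsGeodesicSpace (X : Type*) [MetricSpace X] : Prop :=
  ∀ a b : X, ∃ s : Set X, IsGeodSegment a b s

/-- `τ : ℝ → X` is a geodesic line. -/
def IsGeodLine {X : Type*} [MetricSpace X] (τ : ℝ → X) : Prop :=
  ∀ u v : ℝ, dist (τ u) (τ v) = |u - v|

/-- The action of `G` on `X` is by isometries. -/
def IsomAction (G X : Type*) [Group G] [MetricSpace X] [MulAction G X] : Prop :=
  ∀ (γ : G) (x y : X), dist (γ • x) (γ • y) = dist x y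

/-- A group element `ξ` is hyperbolic: `n ↦ ξⁿ(x)` is a quasi-isometric embedding
of `ℤ` into `X`. -/
def IsHypElem {G : Type*} (X : Type*) [Group G] [MetricSpace X] [MulAction G X]
    (ξ : G) : Prop :=
  ∃ x : X, ∃ A : ℝ, 0 < A ∧ ∃ B : ℝ, ∀ m n : ℤ,
    A * |(m : ℝ) - (n : ℝ)| - B ≤ dist ((ξ ^ m) • x) ((ξ ^ n) • x)

/-- An axis of `ξ`: a geodesic line whose image is at finite Hausdorff distance
from its `ξ`-image (equivalently, joining the two fixed points of `ξ` at
infinity). -/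
def IsAxisAct {G X : Type*} [Group G] [MetricSpace X] [MulAction G X]
    (ξ : G) (τ : ℝ → X) : Prop :=
  IsGeodLine τ ∧ ∃ C : ℝ,
    (∀ t : ℝ, infDist (ξ • τ t) (range τ) ≤ C) ∧
    (∀ t : ℝ, infDist (τ t) (range fun s => ξ • τ s) ≤ C)

/-- The orbit points `x₁ = O`, `xᵢ = ξ^{i-1}(O)` for `i > 0`, `xᵢ = ξ^{i}(O)` for
`i < 0`. -/
noncomputable def orbitPt {G X : Type*} [Group G] [MetricSpace X] [MulAction G X]
    (ξ : G) (O : X) (i : ℤ) : X :=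
  if 0 < i then (ξ ^ (i - 1)) • O else (ξ ^ i) • O

/-- The Voronoi cell `Dᵢ` of the orbit point `xᵢ`. -/
noncomputable def vorCell {G X : Type*} [Group G] [MetricSpace X] [MulAction G X]
    (ξ : G) (O : X) (i : ℤ) : Set X :=
  {y : X | ∀ j : ℤ, j ≠ 0 → dist y (orbitPt ξ O i) ≤ dist y (orbitPt ξ O j)}

/-- `jx y` is the smallest index `j ∈ ℤ*` with `y ∈ D_j`. -/
def IsIndexFun {G X : Type*} [Group G] [MetricSpace X] [MulAction G X]
    (ξ : G) (O : X) (jx : X → ℤ) : Prop :=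
  ∀ y : X, jx y ≠ 0 ∧ y ∈ vorCell ξ O (jx y) ∧
    ∀ k : ℤ, k ≠ 0 → y ∈ vorCell ξ O k → jx y ≤ k

/-- The symmetric element `β₋ = ξ^{−2j−1}β` if `j = j(β) > 0`, and
`β₋ = ξ^{−2j+1}β` if `j < 0`. -/
noncomputable def symmElem {G X : Type*} [Group G] [MetricSpace X] [MulAction G X]
    (ξ : G) (O : X) (jx : X → ℤ) (β : G) : G :=
  if 0 < jx (β • O) then ξ ^ (-2 * jx (β • O) - 1) * β
  else ξ ^ (-2 * jx (β • O) + 1) * β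

/-- `D₁` or `D₋₁` separates points with indices `i` and `j`. -/
def Sep1 (i j : ℤ) : Prop :=
  (min i j < 1 ∧ 1 < max i j) ∨ (min i j < -1 ∧ -1 < max i j)

/-- The twisted product: `α⋆β = αβ₊` if `D₁` or `D₋₁` separates `α⁻¹(O)` and
`β(O)`, and `α⋆β = αβ₋` otherwise. -/
noncomputable def twProd {G X : Type*} [Group G] [MetricSpace X] [MulAction G X]
    (ξ : G) (O : X) (jx : X → ℤ) (α β : G) : G :=
  if Sep1 (jx (α⁻¹ • O)) (jx (β • O)) then α * β else α * symmElem ξ O jx β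

/-- Exponent corresponding to a cell index. -/
def expOf (i : ℤ) : ℤ := if 0 < i then i - 1 else i

/-- Cell index corresponding to an exponent. -/
def idxOf (e : ℤ) : ℤ := if 0 ≤ e then e + 1 else e

lemma idxOf_ne_zero (e : ℤ) : idxOf e ≠ 0 := by unfold idxOf; split_ifs <;> omega

lemma expOf_idxOf (e : ℤ) : expOf (idxOf e) = e := by
  unfold expOf idxOf; split_ifs <;> omega

lemma idxOf_expOf {i : ℤ} (h : i ≠ 0) : idxOf (expOf i) = i := by
  unfold idxOf expOf; split_ifs <;> omega

lemma idx_mono {k l : ℤ} (hk : k ≠ 0) (hl : l ≠ 0) (h : k ≤ l) (m : ℤ) :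
    idxOf (expOf k + m) ≤ idxOf (expOf l + m) := by
  unfold idxOf expOf; split_ifs <;> omega

lemma orbitPt_eq {G X : Type*} [Group G] [MetricSpace X] [MulAction G X]
    (ξ : G) (O : X) (i : ℤ) : orbitPt ξ O i = (ξ ^ expOf i) • O := by
  unfold orbitPt expOf; split_ifs <;> rfl

lemma smul_orbitPt {G X : Type*} [Group G] [MetricSpace X] [MulAction G X]
    (ξ : G) (O : X) (a i : ℤ) :
    (ξ ^ a) • orbitPt ξ O i = orbitPt ξ O (idxOf (expOf i + a)) := by
  rw [orbitPt_eq, orbitPt_eq, expOf_idxOf, ← mul_smul, ← zpow_add, add_comm]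

lemma mem_vorCell_smul {G X : Type*} [Group G] [MetricSpace X] [MulAction G X]
    (hiso : IsomAction G X) (ξ : G) (O : X) (m i : ℤ) (y : X) :
    y ∈ vorCell ξ O i ↔ (ξ ^ m) • y ∈ vorCell ξ O (idxOf (expOf i + m)) := by
  constructor
  · intro h j hj
    have hrw : orbitPt ξ O j = (ξ ^ m) • orbitPt ξ O (idxOf (expOf j - m)) := by
      rw [smul_orbitPt, expOf_idxOf, sub_add_cancel, idxOf_expOf hj]
    rw [hrw, ← smul_orbitPt, hiso, hiso]
    exact h (idxOf (expOf j - m)) (idxOf_ne_zero _)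
  · intro h j hj
    have h2 := h (idxOf (expOf j + m)) (idxOf_ne_zero _)
    rw [← smul_orbitPt, ← smul_orbitPt, hiso, hiso] at h2
    exact h2

lemma jx_smul {G X : Type*} [Group G] [MetricSpace X] [MulAction G X]
    (hiso : IsomAction G X) (ξ : G) (O : X) (jx : X → ℤ)
    (hjx : IsIndexFun ξ O jx) (m : ℤ) (y : X) :
    jx ((ξ ^ m) • y) = idxOf (expOf (jx y) + m) := by
  obtain ⟨hk0, hkmem, hkmin⟩ := hjx y
  obtain ⟨hl0, hlmem, hlmin⟩ := hjx ((ξ ^ m) • y)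
  apply le_antisymm
  · exact hlmin _ (idxOf_ne_zero _) ((mem_vorCell_smul hiso ξ O m _ y).1 hkmem)
  · have h1 : y ∈ vorCell ξ O (idxOf (expOf (jx ((ξ ^ m) • y)) - m)) := by
      apply (mem_vorCell_smul hiso ξ O m _ y).2
      rw [expOf_idxOf, sub_add_cancel, idxOf_expOf hl0]
      exact hlmem
    have h2 := hkmin _ (idxOf_ne_zero _) h1
    have h3 := idx_mono hk0 (idxOf_ne_zero (expOf (jx ((ξ ^ m) • y)) - m)) h2 m
    rwa [expOf_idxOf, sub_add_cancel, idxOf_expOf hl0] at h3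

lemma jx_symmElem {G X : Type*} [Group G] [MetricSpace X] [MulAction G X]
    (hiso : IsomAction G X) (ξ : G) (O : X) (jx : X → ℤ)
    (hjx : IsIndexFun ξ O jx) (β : G) :
    jx (symmElem ξ O jx β • O) =
      if 0 < jx (β • O) then -jx (β • O) - 2 else -jx (β • O) + 2 := by
  have h0 := (hjx (β • O)).1
  unfold symmElem
  split_ifs with h
  · rw [mul_smul, jx_smul hiso ξ O jx hjx]
    unfold idxOf expOf; split_ifs <;> omega
  · rw [mul_smul, jx_smul hiso ξ O jx hjx]
    unfold idxOf expOf; split_ifs <;> omega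

/-- If `α⋆β = α⋆β'` with `β` and `β'` of the same sign, then `β = β'`. -/
theorem stmt17 {G X : Type*} [Group G] [MetricSpace X] [MulAction G X]
    [ProperSpace X] (δ ε L : ℝ)
    (hδ : 0 < δ) (hε : 0 < ε) (hεδ : ε < δ)
    (hyp : FourPointHyp X δ) (hgeo : IsGeodesicSpace X)
    (hiso : IsomAction G X)
    (ξ : G) (hhyp : IsHypElem X ξ) (τ : ℝ → X) (hax : IsAxisAct ξ τ)
    (hL : L = ⨅ x : X, dist x (ξ • x)) (hL300 : 300 * δ ≤ L)
    (O : X) (hO : dist O (ξ • O) ≤ L + ε)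
    (jx : X → ℤ) (hjx : IsIndexFun ξ O jx) :
    ∀ α β β' : G, (0 < jx (β • O) ↔ 0 < jx (β' • O)) →
      twProd ξ O jx α β = twProd ξ O jx α β' → β = β' := by
  intro α β β' hsign heq
  have hb0 := (hjx (β • O)).1
  have hb'0 := (hjx (β' • O)).1
  have hsymm := jx_symmElem hiso ξ O jx hjx β
  have hsymm' := jx_symmElem hiso ξ O jx hjx β'
  unfold twProd at heq
  split_ifs at heq with h1 h2 h2
  · exact mul_left_cancel heq
  · -- β = symmElem β', sign contradiction
    have hb : β = symmElem ξ O jx β' := mul_left_cancel heq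
    rw [hb] at hsign hb0
    rw [hsymm'] at hsign hb0
    split_ifs at hsign hb0 <;> omega
  · have hb : symmElem ξ O jx β = β' := mul_left_cancel heq
    rw [← hb] at hsign hb'0
    rw [hsymm] at hsign hb'0
    split_ifs at hsign hb'0 <;> omega
  · have hb : symmElem ξ O jx β = symmElem ξ O jx β' := mul_left_cancel heq
    have hjeq : jx (symmElem ξ O jx β • O) = jx (symmElem ξ O jx β' • O) := by
      rw [hb]
    rw [hsymm, hsymm'] at hjeq
    have hjj : jx (β • O) = jx (β' • O) := by
      split_ifs at hjeq <;> omega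
    unfold symmElem at hb
    rw [hjj] at hb
    split_ifs at hb <;> exact mul_left_cancel hb
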